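/- (Claim 7) Let n ≥ 3, 1 ≤ r ≤ n−2 and 2 ≤ s ≤ k−1 be integers, and let A ⊆ [k]^n be a compressed set with B_{≥r+1} ∪ ([s]^n ∩ B_r) ⊆ A ⊆ B_{≥r+1} ∪ ([s+1]^n ∩ B_r), where [m]^n = {0,…,m−1}^n. Set D = A ∩ B_r and let 𝒜 be the collection of nonempty subsets of {1,…,n} of size at most n−r. Suppose X ∈ 𝒜 satisfies |X| = 1 and C_X ∩ D ≠ ∅, where C_X = {x ∈ [k]^n : m(x) = s, R_s(x) = X, |R_0(x)| = r}. Then for every S ∈ 𝒜 with S <_bin X we have d(C_S) ⊆ d(D). -/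

import Mathlib

open Finset
open scoped Classical

/-- `R_i(x)`: the set of coordinates of `x` equal to `i`.
The ambient alphabet is `[k+1] = {0,…,k}`. -/
noncomputable def rset {k N : ℕ} (x : Fin N → Fin (k + 1)) (i : ℕ) : Finset (Fin N) :=
  Finset.univ.filter fun j => (x j : ℕ) = i

/-- the strict binary order on finite sets of coordinates:
`X <_bin Y` iff `X ≠ Y` and `max (X Δ Y) ∈ Y`. -/
def binLT {N : ℕ} (X Y : Finset (Fin N)) : Prop :=
  ∃ m ∈ Y, m ∉ X ∧ ∀ j : Fin N, ((j ∈ X ∧ j ∉ Y) ∨ (j ∈ Y ∧ j ∉ X)) → j ≤ m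

/-- the strict `≤`-order on `[k+1]^N`: `x < y` iff `|R_0(x)| > |R_0(y)|`, or
`|R_0(x)| = |R_0(y)|` and for the largest `i` with `R_i(x) ≠ R_i(y)` we have
`max (R_i(x) Δ R_i(y)) ∈ R_i(y)`. -/
def plt {k N : ℕ} (x y : Fin N → Fin (k + 1)) : Prop :=
  (rset y 0).card < (rset x 0).card ∨
    ((rset x 0).card = (rset y 0).card ∧
      ∃ i : ℕ, binLT (rset x i) (rset y i) ∧ ∀ j : ℕ, i < j → rset x j = rset y j)

/-- the `≤`-order on `[k+1]^N`. -/
def ple {k N : ℕ} (x y : Fin N → Fin (k + 1)) : Prop := x = y ∨ plt x y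

/-- `B` is an initial segment of the `≤`-order. -/
def isInitSeg {k N : ℕ} (B : Finset (Fin N → Fin (k + 1))) : Prop :=
  ∀ y ∈ B, ∀ x, ple x y → x ∈ B

/-- the `d`-shadow: all points obtained from a point of `A` by flipping one
nonzero coordinate to `0`. -/
noncomputable def dShadow {k N : ℕ} (A : Finset (Fin N → Fin (k + 1))) :
    Finset (Fin N → Fin (k + 1)) :=
  A.biUnion fun x =>
    (Finset.univ.filter fun i => x i ≠ 0).image fun i => Function.update x i 0

/-- the initial segment of the `≤`-order on `[k+1]^N` of cardinality `m`. -/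
noncomputable def initSeg (k N m : ℕ) : Finset (Fin N → Fin (k + 1)) :=
  Finset.univ.filter fun x => (Finset.univ.filter fun y => ple y x).card ≤ m

/-- the `C_s`-compression of `A ⊆ [k+1]^(n+1)`: replace each slice
`A_{s,t} = {y : t_s y ∈ A}` by the initial segment of the same size. -/
noncomputable def compress {k n : ℕ} (s : Fin (n + 1)) (A : Finset (Fin (n + 1) → Fin (k + 1))) :
    Finset (Fin (n + 1) → Fin (k + 1)) :=
  Finset.univ.biUnion fun t : Fin (k + 1) =>
    (initSeg k n
        (Finset.univ.filter fun y : Fin n → Fin (k + 1) => s.insertNth t y ∈ A).card).image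
      fun y => s.insertNth t y

/-- `A` is compressed if every `C_s`-compression fixes it. -/
def IsCompressed {k n : ℕ} (A : Finset (Fin (n + 1) → Fin (k + 1))) : Prop :=
  ∀ s : Fin (n + 1), compress s A = A

/-- `B_r`: points with exactly `r` zero coordinates. -/
noncomputable def Bexact (k N r : ℕ) : Finset (Fin N → Fin (k + 1)) :=
  Finset.univ.filter fun x => (rset x 0).card = r

/-- `B_{≥r}`: points with at least `r` zero coordinates. -/
noncomputable def Bge (k N r : ℕ) : Finset (Fin N → Fin (k + 1)) :=
  Finset.univ.filter fun x => r ≤ (rset x 0).card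

/-- `m(x)`: the largest coordinate value of `x`. -/
noncomputable def mval {k N : ℕ} (x : Fin N → Fin (k + 1)) : ℕ :=
  Finset.univ.sup fun i => (x i : ℕ)

/-- the class `C_X`: points with maximal coordinate `s`, attained exactly on `X`,
and exactly `r` zero coordinates. -/
noncomputable def classSet (k N s r : ℕ) (X : Finset (Fin N)) : Finset (Fin N → Fin (k + 1)) :=
  Finset.univ.filter fun x => mval x = s ∧ rset x s = X ∧ (rset x 0).card = r

/-- `[m]^N = {0,…,m−1}^N`. -/
noncomputable def box (k N m : ℕ) : Finset (Fin N → Fin (k + 1)) :=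
  Finset.univ.filter fun x => ∀ i, (x i : ℕ) < m

/-- `{1,…,s−1}^N`. -/
noncomputable def box1 (k N s : ℕ) : Finset (Fin N → Fin (k + 1)) :=
  Finset.univ.filter fun x => ∀ i, 1 ≤ (x i : ℕ) ∧ (x i : ℕ) ≤ s - 1

/-- `B` is a down-set. -/
def isDownSet {k N : ℕ} (B : Finset (Fin N → Fin (k + 1))) : Prop :=
  ∀ y ∈ B, ∀ x : Fin N → Fin (k + 1), (∀ j, (x j : ℕ) ≤ (y j : ℕ)) → x ∈ B


lemma mem_rset {k N : ℕ} {x : Fin N → Fin (k+1)} {i : ℕ} {q : Fin N} :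
    q ∈ rset x i ↔ (x q : ℕ) = i := by simp [rset]

noncomputable def fval {N : ℕ} (X : Finset (Fin N)) : ℕ := ∑ j ∈ X, 2 ^ (j : ℕ)

lemma sum_range_two_pow (m : ℕ) : ∑ i ∈ Finset.range m, 2 ^ i < 2 ^ m := by
  induction m with
  | zero => simp
  | succ m ih => rw [Finset.sum_range_succ, pow_succ]; omega

lemma fval_lt_pow {N : ℕ} {X : Finset (Fin N)} {m : ℕ} (h : ∀ j ∈ X, (j : ℕ) < m) :
    fval X < 2 ^ m := by
  have h1 : fval X = ∑ i ∈ X.image (fun j : Fin N => (j : ℕ)), 2 ^ i := by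
    rw [Finset.sum_image (by intro a _ b _ hab; exact Fin.val_injective hab)]
    rfl
  have h2 : X.image (fun j : Fin N => (j : ℕ)) ⊆ Finset.range m := by
    intro q hq
    simp only [Finset.mem_image] at hq
    obtain ⟨j, hj, rfl⟩ := hq
    exact Finset.mem_range.mpr (h j hj)
  calc fval X = ∑ i ∈ X.image (fun j : Fin N => (j : ℕ)), 2 ^ i := h1
    _ ≤ ∑ i ∈ Finset.range m, 2 ^ i := Finset.sum_le_sum_of_subset h2
    _ < 2 ^ m := sum_range_two_pow m

lemma fval_lt {N : ℕ} (X : Finset (Fin N)) : fval X < 2 ^ N :=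
  fval_lt_pow (fun j _ => j.isLt)

lemma fval_lt_of_binLT {N : ℕ} {X Y : Finset (Fin N)} (h : binLT X Y) : fval X < fval Y := by
  obtain ⟨m, hmY, hmX, hall⟩ := h
  have hsplit : fval (X ∩ Y) + fval (X \ Y) = fval X := Finset.sum_inter_add_sum_sdiff X Y _
  have h2 : fval (X \ Y) < 2 ^ (m : ℕ) := by
    apply fval_lt_pow
    intro j hj
    rw [Finset.mem_sdiff] at hj
    have hle : j ≤ m := hall j (Or.inl hj)
    have hne : j ≠ m := by rintro rfl; exact hj.2 hmY
    exact lt_of_le_of_ne hle (by exact_mod_cast fun hc => hne (Fin.val_injective hc))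
  have h3 : fval (X ∩ Y) + 2 ^ (m : ℕ) ≤ fval Y := by
    have hsub : insert m (X ∩ Y) ⊆ Y := by
      intro q hq
      rcases Finset.mem_insert.mp hq with rfl | hq
      · exact hmY
      · exact (Finset.mem_inter.mp hq).2
    have hmnot : m ∉ X ∩ Y := fun hc => hmX (Finset.mem_inter.mp hc).1
    calc fval (X ∩ Y) + 2 ^ (m : ℕ) = fval (insert m (X ∩ Y)) := by
          rw [fval, fval, Finset.sum_insert hmnot]; omega
      _ ≤ fval Y := Finset.sum_le_sum_of_subset hsub
  omega

noncomputable def gval {k N : ℕ} (x : Fin N → Fin (k+1)) : ℕ :=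
  ∑ d ∈ Finset.range (k+1), fval (rset x (d+1)) * (2^N)^d

lemma geom_aux (M K : ℕ) (a : ℕ → ℕ) (ha : ∀ d, a d < M) :
    ∑ d ∈ Finset.range K, a d * M ^ d < M ^ K := by
  induction K with
  | zero => simp
  | succ K ih =>
    rw [Finset.sum_range_succ, pow_succ]
    have h1 : a K + 1 ≤ M := ha K
    calc ∑ d ∈ Finset.range K, a d * M ^ d + a K * M ^ K
        < M ^ K + a K * M ^ K := by omega
      _ = (a K + 1) * M ^ K := by ring
      _ ≤ M * M ^ K := Nat.mul_le_mul_right _ h1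
      _ = M ^ K * M := by ring

lemma digit_lt (M K : ℕ) (a b : ℕ → ℕ) (ha : ∀ d, a d < M)
    (i : ℕ) (hiK : i < K) (hlt : a i < b i) (heq : ∀ d, i < d → a d = b d) :
    ∑ d ∈ Finset.range K, a d * M ^ d < ∑ d ∈ Finset.range K, b d * M ^ d := by
  have hsplit : ∀ c : ℕ → ℕ, ∑ d ∈ Finset.range K, c d * M^d
      = ∑ d ∈ Finset.range (i+1), c d * M^d + ∑ d ∈ Finset.Ico (i+1) K, c d * M^d := by
    intro c; rw [Finset.sum_range_add_sum_Ico _ (by omega)]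
  rw [hsplit a, hsplit b]
  have htail : ∑ d ∈ Finset.Ico (i+1) K, a d * M^d = ∑ d ∈ Finset.Ico (i+1) K, b d * M^d :=
    Finset.sum_congr rfl (fun d hd => by
      rw [heq d (by simp only [Finset.mem_Ico] at hd; omega)])
  rw [htail]
  have hhead : ∑ d ∈ Finset.range (i+1), a d * M^d < ∑ d ∈ Finset.range (i+1), b d * M^d := by
    rw [Finset.sum_range_succ, Finset.sum_range_succ]
    have h1 : ∑ d ∈ Finset.range i, a d * M^d < M ^ i := geom_aux M i a ha
    have h2 : a i * M ^ i + M ^ i ≤ b i * M ^ i := by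
      calc a i * M ^ i + M ^ i = (a i + 1) * M ^ i := by ring
        _ ≤ b i * M ^ i := Nat.mul_le_mul_right _ hlt
    have h0 : 0 ≤ ∑ d ∈ Finset.range i, b d * M^d := Nat.zero_le _
    linarith
  omega

lemma gval_lt {k N : ℕ} (x : Fin N → Fin (k+1)) : gval x < (2^N)^(k+1) :=
  geom_aux _ _ _ (fun d => fval_lt _)

noncomputable def pval {k N : ℕ} (x : Fin N → Fin (k+1)) : ℕ :=
  (N - (rset x 0).card) * (2^N)^(k+1) + gval x

lemma eq_of_rset_eq {k N : ℕ} {x y : Fin N → Fin (k+1)}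
    (h : ∀ i : ℕ, 1 ≤ i → rset x i = rset y i) : x = y := by
  funext q
  apply Fin.ext
  rcases Nat.eq_zero_or_pos (x q : ℕ) with h1 | h1
  · rcases Nat.eq_zero_or_pos (y q : ℕ) with h2 | h2
    · omega
    · have hq : q ∈ rset y ((y q : ℕ)) := mem_rset.mpr rfl
      rw [← h _ h2] at hq
      have := mem_rset.mp hq
      omega
  · have hq : q ∈ rset x ((x q : ℕ)) := mem_rset.mpr rfl
    rw [h _ h1] at hq
    have := mem_rset.mp hq
    omega

lemma not_binLT_self {N : ℕ} (X : Finset (Fin N)) : ¬ binLT X X := by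
  rintro ⟨m, hmY, hmX, -⟩; exact hmX hmY

lemma pval_lt_of_plt {k N : ℕ} {x y : Fin N → Fin (k+1)} (h : plt x y) : pval x < pval y := by
  have hcx : (rset x 0).card ≤ N := le_trans (Finset.card_le_univ _) (by simp)
  have hcy : (rset y 0).card ≤ N := le_trans (Finset.card_le_univ _) (by simp)
  rcases h with h | ⟨hcard, i, hbin, habove⟩
  · have h1 : N - (rset x 0).card < N - (rset y 0).card := by omega
    have h2 : gval x < (2^N)^(k+1) := gval_lt x
    have h3 : (N - (rset x 0).card) + 1 ≤ N - (rset y 0).card := h1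
    calc pval x < (N - (rset x 0).card) * (2^N)^(k+1) + (2^N)^(k+1) := by
          unfold pval; omega
      _ = ((N - (rset x 0).card) + 1) * (2^N)^(k+1) := by ring
      _ ≤ (N - (rset y 0).card) * (2^N)^(k+1) := Nat.mul_le_mul_right _ h3
      _ ≤ pval y := Nat.le_add_right _ _
  · -- second clause: show gval x < gval y
    have hi1 : 1 ≤ i := by
      rcases Nat.eq_zero_or_pos i with rfl | h1
      · exfalso
        have hxy : x = y := eq_of_rset_eq (fun j hj => habove j hj)
        subst hxy
        exact not_binLT_self _ hbin
      · exact h1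
    have hik : i ≤ k := by
      by_contra hik
      obtain ⟨m, hmY, -, -⟩ := hbin
      have := mem_rset.mp hmY
      have := (y m).isLt
      omega
    have hg : gval x < gval y := by
      unfold gval
      apply digit_lt _ _ _ _ (fun d => fval_lt _) (i-1) (by omega)
      · have : i - 1 + 1 = i := by omega
        rw [this]
        exact fval_lt_of_binLT hbin
      · intro d hd
        rw [habove (d+1) (by omega)]
    unfold pval
    rw [hcard]
    omega

lemma plt_total {k N : ℕ} {x y : Fin N → Fin (k+1)} (h : x ≠ y) : plt x y ∨ plt y x := by
  rcases lt_trichotomy (rset x 0).card (rset y 0).card with hc | hc | hc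
  · right; exact Or.inl hc
  · -- cards equal: find top differing level
    have hne : ∃ i ∈ Finset.range (k+1), rset x i ≠ rset y i := by
      by_contra hcon
      push_neg at hcon
      exact h (eq_of_rset_eq (fun i hi => by
        by_cases hik : i ≤ k
        · exact hcon i (Finset.mem_range.mpr (by omega))
        · ext q
          simp only [mem_rset]
          have h1 := (x q).isLt
          have h2 := (y q).isLt
          constructor <;> intro hh <;> omega))
    set I := (Finset.range (k+1)).filter (fun i => rset x i ≠ rset y i) with hI
    have hIne : I.Nonempty := by
      obtain ⟨i, hi1, hi2⟩ := hne
      exact ⟨i, by simp [hI, hi1, hi2]⟩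
    set i := I.max' hIne with hidef
    have hiI : i ∈ I := I.max'_mem hIne
    have hixy : rset x i ≠ rset y i := (Finset.mem_filter.mp hiI).2
    have habove : ∀ j : ℕ, i < j → rset x j = rset y j := by
      intro j hj
      by_cases hjk : j ≤ k
      · by_contra hcon
        have hjI : j ∈ I := Finset.mem_filter.mpr ⟨Finset.mem_range.mpr (by omega), hcon⟩
        have := Finset.le_max' I j hjI
        omega
      · ext q
        simp only [mem_rset]
        have h1 := (x q).isLt
        have h2 := (y q).isLt
        constructor <;> intro hh <;> omega
    set E := (rset x i \ rset y i) ∪ (rset y i \ rset x i) with hE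
    have hEne : E.Nonempty := by
      by_contra hcon
      apply hixy
      ext q
      rw [Finset.not_nonempty_iff_eq_empty] at hcon
      have h1 : q ∉ E := by rw [hcon]; exact Finset.notMem_empty q
      simp only [hE, Finset.mem_union, Finset.mem_sdiff, not_or, not_and, not_not] at h1
      constructor
      · intro hq; by_contra hq2; exact hq2 (h1.1 hq)
      · intro hq; by_contra hq2; exact hq2 (h1.2 hq)
    set m := E.max' hEne with hm
    have hmE : m ∈ E := E.max'_mem hEne
    have hallE : ∀ j, ((j ∈ rset x i ∧ j ∉ rset y i) ∨ (j ∈ rset y i ∧ j ∉ rset x i)) → j ≤ m := by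
      intro j hj
      apply Finset.le_max'
      simp only [hE, Finset.mem_union, Finset.mem_sdiff]
      tauto
    simp only [hE, Finset.mem_union, Finset.mem_sdiff] at hmE
    rcases hmE with ⟨hm1, hm2⟩ | ⟨hm1, hm2⟩
    · right
      refine Or.inr ⟨hc.symm, i, ⟨m, hm1, hm2, ?_⟩, fun j hj => (habove j hj).symm⟩
      intro j hj
      apply hallE
      tauto
    · left
      exact Or.inr ⟨hc, i, ⟨m, hm1, hm2, hallE⟩, habove⟩
  · left; exact Or.inl hc

lemma plt_trans {k N : ℕ} {x y z : Fin N → Fin (k+1)} (h1 : plt x y) (h2 : plt y z) :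
    plt x z := by
  have p1 := pval_lt_of_plt h1
  have p2 := pval_lt_of_plt h2
  have hxz : x ≠ z := by rintro rfl; omega
  rcases plt_total hxz with h | h
  · exact h
  · exact absurd (pval_lt_of_plt h) (by omega)

lemma ple_trans {k N : ℕ} {x y z : Fin N → Fin (k+1)} (h1 : ple x y) (h2 : ple y z) :
    ple x z := by
  rcases h1 with rfl | h1
  · exact h2
  · rcases h2 with rfl | h2
    · exact Or.inr h1
    · exact Or.inr (plt_trans h1 h2)

lemma initSeg_closed {k N m : ℕ} {u v : Fin N → Fin (k+1)} (hu : u ∈ initSeg k N m)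
    (h : ple v u) : v ∈ initSeg k N m := by
  simp only [initSeg, Finset.mem_filter, Finset.mem_univ, true_and] at hu ⊢
  refine le_trans (Finset.card_le_card ?_) hu
  intro w hw
  simp only [Finset.mem_filter, Finset.mem_univ, true_and] at hw ⊢
  exact ple_trans hw h

lemma mem_of_slice {k n : ℕ} {A : Finset (Fin (n+1) → Fin (k+1))} (hA : IsCompressed A)
    {p : Fin (n+1)} {u v : Fin (n+1) → Fin (k+1)} (hu : u ∈ A) (hvp : v p = u p)
    (hple : ple (fun j => v (p.succAbove j)) (fun j => u (p.succAbove j))) : v ∈ A := by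
  have hAp := hA p
  rw [← hAp] at hu ⊢
  simp only [compress, Finset.mem_biUnion, Finset.mem_univ, true_and, Finset.mem_image] at hu ⊢
  obtain ⟨t, y, hy, hyu⟩ := hu
  have hut : u p = t := by rw [← hyu]; simp
  have hyeq : y = fun j => u (p.succAbove j) := by
    funext j; rw [← hyu]; simp
  refine ⟨t, fun j => v (p.succAbove j), ?_, ?_⟩
  · exact initSeg_closed (by rwa [hyeq] at hy) hple
  · have h1 : p.insertNth (v p) (fun j => v (p.succAbove j)) = v :=
      Fin.insertNth_self_removeNth p v
    rwa [hvp, hut] at h1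

lemma rset_comp_succAbove {k n : ℕ} (x : Fin (n+1) → Fin (k+1)) (p : Fin (n+1)) (i : ℕ) :
    Finset.image (p.succAbove) (rset (fun j => x (p.succAbove j)) i) = (rset x i).erase p := by
  ext q
  simp only [Finset.mem_image, mem_rset, Finset.mem_erase]
  constructor
  · rintro ⟨j, hj, rfl⟩; exact ⟨Fin.succAbove_ne p j, hj⟩
  · rintro ⟨hqp, hq⟩
    obtain ⟨j, rfl⟩ := Fin.exists_succAbove_eq hqp
    exact ⟨j, hq, rfl⟩

lemma card_rset_comp {k n : ℕ} (x : Fin (n+1) → Fin (k+1)) (p : Fin (n+1)) (i : ℕ) :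
    (rset (fun j => x (p.succAbove j)) i).card = ((rset x i).erase p).card := by
  rw [← rset_comp_succAbove]
  exact (Finset.card_image_of_injective _ (Fin.succAbove_right_injective)).symm

/-- KEY STEP: if `w ∈ B_r` has values `≤ s` with `R_s(w)` entirely below `x0`, and agrees
with `ystar ∈ A` (the given point of `C_X ∩ D`) at some coordinate `p ≠ x0`, then `w ∈ A`. -/
lemma key_step {k n r s : ℕ} {A : Finset (Fin (n+1) → Fin (k+1))} (hA : IsCompressed A)
    {ystar w : Fin (n+1) → Fin (k+1)} {x0 p : Fin (n+1)}
    (hyA : ystar ∈ A) (hyle : ∀ q, (ystar q : ℕ) ≤ s) (hyX : rset ystar s = {x0})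
    (hy0 : (rset ystar 0).card = r)
    (hwle : ∀ q, (w q : ℕ) ≤ s) (hws : ∀ q ∈ rset w s, q < x0)
    (hw0 : (rset w 0).card = r)
    (hp : p ≠ x0) (hwp : w p = ystar p) : w ∈ A := by
  apply mem_of_slice hA hyA hwp
  refine Or.inr (Or.inr ⟨?_, s, ?_, ?_⟩)
  · -- zero counts in the slice agree
    rw [card_rset_comp, card_rset_comp]
    have hmem : p ∈ rset w 0 ↔ p ∈ rset ystar 0 := by
      simp only [mem_rset, hwp]
    by_cases hp0 : p ∈ rset w 0
    · rw [Finset.card_erase_of_mem hp0, Finset.card_erase_of_mem (hmem.mp hp0), hw0, hy0]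
    · rw [Finset.erase_eq_of_notMem hp0,
        Finset.erase_eq_of_notMem (fun hcc => hp0 (hmem.mpr hcc)), hw0, hy0]
  · -- strict binLT at level s
    obtain ⟨j0, hj0⟩ := Fin.exists_succAbove_eq (Ne.symm hp)
    have hx0s : (ystar x0 : ℕ) = s := by
      have : x0 ∈ rset ystar s := by rw [hyX]; exact Finset.mem_singleton_self x0
      exact mem_rset.mp this
    refine ⟨j0, ?_, ?_, ?_⟩
    · rw [mem_rset, hj0]; exact hx0s
    · intro hmem
      rw [mem_rset, hj0] at hmem
      exact absurd (hws x0 (mem_rset.mpr hmem)) (lt_irrefl x0)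
    · intro j hj
      rcases hj with ⟨h1, -⟩ | ⟨h1, -⟩
      · have hv := mem_rset.mp h1
        have hlt : p.succAbove j < x0 := hws _ (mem_rset.mpr hv)
        rw [← hj0] at hlt
        exact le_of_lt (Fin.succAbove_lt_succAbove_iff.mp hlt)
      · have heq : p.succAbove j = x0 := by
          have hv := mem_rset.mp h1
          have h1' : p.succAbove j ∈ rset ystar s := mem_rset.mpr hv
          rw [hyX] at h1'
          exact Finset.mem_singleton.mp h1'
        rw [← hj0] at heq
        exact le_of_eq (Fin.succAbove_right_injective heq)
  · -- levels above s are empty on both sides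
    intro j hj
    ext q
    simp only [mem_rset]
    have h1 := hwle (p.succAbove q)
    have h2 := hyle (p.succAbove q)
    constructor <;> intro hh <;> omega

/-- **Claim 7.** Let `n ≥ 3`, `1 ≤ r ≤ n − 2`, `2 ≤ s ≤ k − 1`, and let `A ⊆ [k]^n`
be compressed with `B_{≥ r+1} ∪ ([s]^n ∩ B_r) ⊆ A ⊆ B_{≥ r+1} ∪ ([s+1]^n ∩ B_r)`;
set `D = A ∩ B_r`. If `X` is nonempty of size `1` with `C_X ∩ D ≠ ∅`, then for every
nonempty `S` of size at most `n − r` with `S <_bin X` we have `d(C_S) ⊆ d(D)`.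
(Dimension `n ≥ 3` is rendered as `n + 1` with `n ≥ 2`; alphabet `[k]` as `Fin (k+1)`,
so `s ≤ k`.) -/
theorem claim7 (k n r s : ℕ) (hn : 2 ≤ n) (hr1 : 1 ≤ r) (hr2 : r + 1 ≤ n)
    (hs1 : 2 ≤ s) (hs2 : s ≤ k)
    (A : Finset (Fin (n + 1) → Fin (k + 1))) (hA : IsCompressed A)
    (hlow : Bge k (n + 1) (r + 1) ∪ (box k (n + 1) s ∩ Bexact k (n + 1) r) ⊆ A)
    (hhigh : A ⊆ Bge k (n + 1) (r + 1) ∪ (box k (n + 1) (s + 1) ∩ Bexact k (n + 1) r))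
    (X : Finset (Fin (n + 1))) (hXcard : X.card = 1)
    (hX : (classSet k (n + 1) s r X ∩ (A ∩ Bexact k (n + 1) r)).Nonempty) :
    ∀ S : Finset (Fin (n + 1)), S.Nonempty → S.card ≤ (n + 1) - r → binLT S X →
      dShadow (classSet k (n + 1) s r S) ⊆ dShadow (A ∩ Bexact k (n + 1) r) := by
  obtain ⟨ystar, hy⟩ := hX
  rw [Finset.mem_inter, Finset.mem_inter] at hy
  obtain ⟨hyC, hyA, hyB⟩ := hy
  simp only [classSet, Finset.mem_filter, Finset.mem_univ, true_and] at hyC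
  obtain ⟨hym, hyX, hy0⟩ := hyC
  obtain ⟨x0, rfl⟩ := Finset.card_eq_one.mp hXcard
  intro S hSne hScard hSX z hz
  simp only [dShadow, Finset.mem_biUnion, Finset.mem_image, Finset.mem_filter,
    Finset.mem_univ, true_and] at hz
  obtain ⟨x, hxC, i, hxi, hzx⟩ := hz
  simp only [classSet, Finset.mem_filter, Finset.mem_univ, true_and] at hxC
  obtain ⟨hxm, hxS, hx0⟩ := hxC
  subst hzx
  set z := Function.update x i 0 with hzdef
  -- basic facts
  have hyle : ∀ q, (ystar q : ℕ) ≤ s := by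
    intro q
    unfold mval at hym
    exact le_trans (Finset.le_sup (f := fun i => ((ystar i : ℕ))) (Finset.mem_univ q))
      (le_of_eq hym)
  have hxle : ∀ q, (x q : ℕ) ≤ s := by
    intro q
    unfold mval at hxm
    exact le_trans (Finset.le_sup (f := fun i => ((x i : ℕ))) (Finset.mem_univ q))
      (le_of_eq hxm)
  have hSlt : ∀ a ∈ S, a < x0 := by
    intro a ha
    obtain ⟨m0, hm0X, hm0S, hallS⟩ := hSX
    rw [Finset.mem_singleton] at hm0X
    subst hm0X
    have hne : a ≠ m0 := fun h => hm0S (h ▸ ha)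
    have hle := hallS a (Or.inl ⟨ha, fun hc => hne (Finset.mem_singleton.mp hc)⟩)
    exact lt_of_le_of_ne hle hne
  have hxi' : (x i : ℕ) ≠ 0 := by intro h; exact hxi (Fin.ext (by rw [h, Fin.val_zero]))
  have hzle : ∀ q, (z q : ℕ) ≤ s := by
    intro q
    by_cases hq : q = i
    · subst hq; simp only [hzdef, Function.update_self, Fin.val_zero]; omega
    · simp only [hzdef, Function.update_apply, if_neg hq]; exact hxle q
  have hrz0 : rset z 0 = insert i (rset x 0) := by
    ext q
    by_cases hq : q = i
    · subst hq
      simp [mem_rset, hzdef, Function.update_self]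
    · simp [mem_rset, hzdef, Function.update_apply, hq]
  have hcz0 : (rset z 0).card = r + 1 := by
    rw [hrz0, Finset.card_insert_of_notMem (fun hc => hxi' (mem_rset.mp hc)), hx0]
  have hrzs : rset z s = S.erase i := by
    ext q
    by_cases hq : q = i
    · subst hq
      simp only [mem_rset, hzdef, Function.update_self, Fin.val_zero, Finset.mem_erase]
      constructor
      · intro hc; omega
      · rintro ⟨hc, -⟩; exact absurd rfl hc
    · simp only [mem_rset, hzdef, Function.update_apply, if_neg hq, Finset.mem_erase]
      rw [← hxS]
      simp [mem_rset, hq]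
  -- the common final step
  have final : ∀ (jj : Fin (n+1)) (t : Fin (k+1)) (p : Fin (n+1)), jj ∈ rset z 0 →
      (t : ℕ) ≠ 0 → (t : ℕ) < s → p ≠ x0 → Function.update z jj t p = ystar p →
      z ∈ dShadow (A ∩ Bexact k (n + 1) r) := by
    intro jj t p hjjz ht0 hts hpx0 hwp
    set w := Function.update z jj t with hwdef
    have hzjj : (z jj : ℕ) = 0 := mem_rset.mp hjjz
    have hwle : ∀ q, (w q : ℕ) ≤ s := by
      intro q
      by_cases hq : q = jj
      · subst hq; simp only [hwdef, Function.update_self]; omega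
      · simp only [hwdef, Function.update_apply, if_neg hq]; exact hzle q
    have hrws : rset w s = S.erase i := by
      rw [← hrzs]
      ext q
      by_cases hq : q = jj
      · subst hq
        simp only [mem_rset, hwdef, Function.update_self]
        constructor
        · intro hc; omega
        · intro hc; omega
      · simp only [mem_rset, hwdef, Function.update_apply, if_neg hq]
    have hws : ∀ q ∈ rset w s, q < x0 := by
      intro q hq
      rw [hrws] at hq
      exact hSlt q (Finset.mem_of_mem_erase hq)
    have hrw0 : rset w 0 = (rset z 0).erase jj := by
      ext q
      by_cases hq : q = jj
      · subst hq
        simp only [mem_rset, hwdef, Function.update_self, Finset.mem_erase]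
        constructor
        · intro hc; omega
        · rintro ⟨hc, -⟩; exact absurd rfl hc
      · simp only [mem_rset, hwdef, Function.update_apply, if_neg hq, Finset.mem_erase, hq]
        tauto
    have hw0 : (rset w 0).card = r := by
      rw [hrw0, Finset.card_erase_of_mem hjjz, hcz0]
      omega
    have hwA : w ∈ A := key_step hA hyA hyle hyX hy0 hwle hws hw0 hpx0 hwp
    simp only [dShadow, Finset.mem_biUnion, Finset.mem_image, Finset.mem_filter,
      Finset.mem_univ, true_and]
    refine ⟨w, ?_, jj, ?_, ?_⟩
    · rw [Finset.mem_inter]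
      exact ⟨hwA, by simp only [Bexact, Finset.mem_filter, Finset.mem_univ, true_and]; exact hw0⟩
    · simp only [hwdef, Function.update_self]
      intro hc
      rw [hc] at ht0
      simp at ht0
    · rw [hwdef, Function.update_idem]
      have hz0 : (0 : Fin (k+1)) = z jj := by
        apply Fin.ext; simp [hzjj]
      rw [hz0, Function.update_eq_self]
  -- choose a zero j of z with j ≠ x0
  have hjex : ((rset z 0) \ {x0}).Nonempty := by
    rw [← Finset.card_pos]
    have h1 := Finset.le_card_sdiff ({x0} : Finset (Fin (n+1))) (rset z 0)
    rw [hcz0] at h1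
    simp only [Finset.card_singleton] at h1
    omega
  obtain ⟨j, hj⟩ := hjex
  rw [Finset.mem_sdiff, Finset.mem_singleton] at hj
  obtain ⟨hjz, hjx0⟩ := hj
  have hzj : (z j : ℕ) = 0 := mem_rset.mp hjz
  by_cases hyj : (ystar j : ℕ) = 0
  · -- raise some other zero jj to 1, slice at p = j
    have hjjex : ((rset z 0) \ {j}).Nonempty := by
      rw [← Finset.card_pos]
      have h1 := Finset.le_card_sdiff ({j} : Finset (Fin (n+1))) (rset z 0)
      rw [hcz0] at h1
      simp only [Finset.card_singleton] at h1
      omega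
    obtain ⟨jj, hjj⟩ := hjjex
    rw [Finset.mem_sdiff, Finset.mem_singleton] at hjj
    obtain ⟨hjjz, hjjne⟩ := hjj
    have ht1 : ((1 : Fin (k+1)) : ℕ) = 1 := by
      rw [Fin.val_one', Nat.mod_eq_of_lt (by omega)]
    apply final jj 1 j hjjz (by rw [ht1]; omega) (by rw [ht1]; omega) hjx0
    rw [Function.update_apply, if_neg (fun hc => hjjne hc.symm)]
    apply Fin.ext
    rw [hzj, hyj]
  · -- raise j itself to ystar j, slice at p = j
    have htne : (ystar j : ℕ) ≠ s := by
      intro hc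
      have : j ∈ rset ystar s := mem_rset.mpr hc
      rw [hyX, Finset.mem_singleton] at this
      exact hjx0 this
    have hts : (ystar j : ℕ) < s := lt_of_le_of_ne (hyle j) htne
    apply final j (ystar j) j hjz hyj hts hjx0
    rw [Function.update_self]
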